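/- Let Z be a given 2d-th order tensor and consider the projection problem: minimize ‖X − Z‖_F² over super-symmetric X subject to Σ_{k∈K(n,d)} (d!/∏_j k_j!) X_{1^{2k_1}⋯n^{2k_n}} = 1. Then the optimal solution X* satisfies: X*_{i_1⋯i_{2d}} = Ẑ_{i_1⋯i_{2d}} for indices not of the 'all-even-multiplicity' type, and X*_{1^{2k_1}⋯n^{2k_n}} = (λ/2)·α(k,d) + Ẑ_{1^{2k_1}⋯n^{2k_n}} otherwise, where Ẑ is the symmetrization of Z, α(k,d) = (d!/∏_j k_j!)/((2d)!/∏_j (2k_j)!), and λ = 2(1 − Σ_{k} (d!/∏_j k_j!) Ẑ_{1^{2k_1}⋯n^{2k_n}}) / Σ_{k} (d!/∏_j k_j!) α(k,d). -/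

import Mathlib

/-- Super-symmetry: invariance of entries under permutations of index positions. -/
def SuperSym {ι n : Type*} (A : (ι → n) → ℝ) : Prop :=
  ∀ (σ : Equiv.Perm ι) (i : ι → n), A (i ∘ σ) = A i

/-- The canonical index of length `d + d` in which each `j : Fin n` appears `2 * k j` times
(in increasing order); when `∑ j, k j = d` this lists `j` with multiplicity `2 k_j`. -/
def repIdx (n d : ℕ) [NeZero n] (k : Fin n → ℕ) : Fin (d + d) → Fin n :=
  fun t => ((List.finRange n).flatMap fun j => List.replicate (2 * k j) j).getD t.val
    ⟨0, Nat.pos_of_ne_zero (NeZero.ne n)⟩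

open Mathlib in
lemma repLen (n d : ℕ) [NeZero n] (k : Fin n → ℕ) (hk : ∑ j, k j = d) :
    ((List.finRange n).flatMap fun j => List.replicate (2 * k j) j).length = d + d := by
  rw [List.length_flatMap]
  rw [show ((List.map (fun a => (List.replicate (2 * k a) (a:Fin n)).length) (List.finRange n))).sum
      = ∑ j : Fin n, 2 * k j from ?_]
  · rw [← Finset.mul_sum, hk]; omega
  · rw [Fin.sum_univ_def]; congr 1; apply List.map_congr_left; intro j _; simp

open Mathlib in
lemma repCount (n d : ℕ) [NeZero n] (k : Fin n → ℕ) (hk : ∑ j, k j = d) (j : Fin n) :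
    (Finset.univ.filter (fun t => repIdx n d k t = j)).card = 2 * k j := by
  set L := (List.finRange n).flatMap fun j => List.replicate (2 * k j) (j : Fin n) with hL
  have hlen : L.length = d + d := repLen n d k hk
  have hvec : ∀ t : Fin (d + d), repIdx n d k t = List.Vector.get (⟨L, hlen⟩ : List.Vector (Fin n) (d+d)) t := by
    intro t
    show L.getD t.val _ = _
    rw [List.getD_eq_getElem?_getD, List.getElem?_eq_getElem (show (t:ℕ) < L.length by omega)]
    rfl
  simp_rw [hvec]
  refine (Fin.card_filter_univ_eq_vector_get_eq_count j (⟨L, hlen⟩ : List.Vector (Fin n) (d+d))).trans ?_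
  show L.count j = _
  rw [hL, List.count_flatMap]
  rw [show (List.map (List.count j ∘ fun j => List.replicate (2 * k j) (j:Fin n)) (List.finRange n)).sum
      = ∑ j' : Fin n, if j' = j then 2 * k j' else 0 from ?_]
  · simp
  · rw [Fin.sum_univ_def]; congr 1; apply List.map_congr_left; intro j' _
    show List.count j (List.replicate (2 * k j') j') = _
    rw [List.count_replicate]
    by_cases h : j' = j
    · subst h; simp
    · rw [if_neg h, if_neg (by simpa [beq_iff_eq] using h)]

section Stab

set_option linter.unusedSectionVars false
variable {α β : Type*} [DecidableEq β]

def fiberPermAux (f : α → β) (π : ∀ b, Equiv.Perm {a // f a = b}) (b : β) (a : α) (hb : f a = b) :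
    α := ((π b) ⟨a, hb⟩).1

lemma fiberPermAux_spec (f : α → β) (π : ∀ b, Equiv.Perm {a // f a = b}) (b : β) (a : α)
    (hb : f a = b) : f (fiberPermAux f π b a hb) = b := ((π b) ⟨a, hb⟩).2

lemma fiberPermAux_congr (f : α → β) (π : ∀ b, Equiv.Perm {a // f a = b}) (b : β) (a : α)
    (hb : f a = b) : fiberPermAux f π (f a) a rfl = fiberPermAux f π b a hb := by
  subst hb; rfl

lemma fiberPermAux_symm (f : α → β) (π : ∀ b, Equiv.Perm {a // f a = b}) (b : β) (a : α)
    (hb : f a = b) :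
    fiberPermAux f (fun b => (π b).symm) b (fiberPermAux f π b a hb)
      (fiberPermAux_spec f π b a hb) = a := by
  unfold fiberPermAux
  have : (⟨((π b) ⟨a, hb⟩).1, fiberPermAux_spec f π b a hb⟩ : {a // f a = b}) = (π b) ⟨a, hb⟩ :=
    Subtype.ext rfl
  rw [this, Equiv.symm_apply_apply]

lemma fiberPermAux_symm' (f : α → β) (π : ∀ b, Equiv.Perm {a // f a = b}) (b : β) (a : α)
    (hb : f a = b) :
    fiberPermAux f π b (fiberPermAux f (fun b => (π b).symm) b a hb)
      (fiberPermAux_spec f (fun b => (π b).symm) b a hb) = a := by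
  have h := fiberPermAux_symm f (fun b => (π b).symm) b a hb
  convert h using 2
  exact funext fun b => (Equiv.symm_symm (π b)).symm

def stabEquiv (f : α → β) : {σ : Equiv.Perm α // f ∘ σ = f} ≃ ∀ b, Equiv.Perm {a // f a = b} where
  toFun := fun σ b =>
    { toFun := fun a => ⟨σ.1 a.1, by rw [show f (σ.1 a.1) = f a.1 from congrFun σ.2 a.1, a.2]⟩
      invFun := fun a => ⟨σ.1.symm a.1, by
        have h1 : f (σ.1 (σ.1.symm a.1)) = f (σ.1.symm a.1) := congrFun σ.2 _
        rw [σ.1.apply_symm_apply] at h1; rw [← h1, a.2]⟩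
      left_inv := fun a => by simp
      right_inv := fun a => by simp }
  invFun := fun π =>
    ⟨{ toFun := fun a => fiberPermAux f π (f a) a rfl
       invFun := fun a => fiberPermAux f (fun b => (π b).symm) (f a) a rfl
       left_inv := fun a => by
         show fiberPermAux f (fun b => (π b).symm) (f (fiberPermAux f π (f a) a rfl)) _ rfl = a
         rw [fiberPermAux_congr f (fun b => (π b).symm) (f a) _
           (fiberPermAux_spec f π (f a) a rfl)]
         exact fiberPermAux_symm f π (f a) a rfl
       right_inv := fun a => by
         show fiberPermAux f π (f (fiberPermAux f (fun b => (π b).symm) (f a) a rfl)) _ rfl = a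
         rw [fiberPermAux_congr f π (f a) _
           (fiberPermAux_spec f (fun b => (π b).symm) (f a) a rfl)]
         exact fiberPermAux_symm' f π (f a) a rfl },
     by funext a; exact fiberPermAux_spec f π (f a) a rfl⟩
  left_inv := fun σ => by
    ext a
    rfl
  right_inv := fun π => by
    funext b
    ext a
    show fiberPermAux f π (f a.1) a.1 rfl = ((π b) a).1
    rw [fiberPermAux_congr f π b a.1 a.2]
    rfl

lemma stabCard {α β : Type*} [Fintype α] [DecidableEq α] [Fintype β] [DecidableEq β] (f : α → β) :
    (Finset.univ.filter (fun σ : Equiv.Perm α => f ∘ σ = f)).card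
      = ∏ j : β, ((Finset.univ.filter fun t => f t = j).card).factorial := by
  rw [← Fintype.card_subtype]
  rw [Fintype.card_congr (stabEquiv f)]
  rw [Fintype.card_pi]
  congr 1
  funext j
  rw [Fintype.card_perm, Fintype.card_subtype]

end Stab

section SymDelta

variable {α β : Type*} [Fintype α] [DecidableEq α] [Fintype β] [DecidableEq β]

/-- `((d+d)!)` times the symmetrization of the delta tensor at index `i₀`. -/
def symDelta (i₀ : α → β) : (α → β) → ℝ :=
  fun i => ((Finset.univ.filter (fun σ : Equiv.Perm α => i ∘ σ = i₀)).card : ℝ)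

lemma superSym_symDelta (i₀ : α → β) : SuperSym (symDelta i₀) := by
  intro σ i
  unfold symDelta
  congr 1
  apply Finset.card_bij' (fun τ _ => σ * τ) (fun τ _ => σ⁻¹ * τ)
  · intro τ hτ
    simp only [Finset.mem_filter, Finset.mem_univ, true_and] at hτ ⊢
    rw [← hτ]; rfl
  · intro τ hτ
    simp only [Finset.mem_filter, Finset.mem_univ, true_and] at hτ ⊢
    rw [← hτ]; funext x; simp
  · intro τ _; simp [mul_assoc, ← mul_assoc]
  · intro τ _; simp [mul_assoc, ← mul_assoc]

lemma comp_perm_eq_iff (i i₀ : α → β) (σ : Equiv.Perm α) :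
    i ∘ ⇑σ = i₀ ↔ i = i₀ ∘ ⇑σ⁻¹ := by
  constructor
  · intro h; funext x
    have h2 := congrFun h (σ⁻¹ x)
    simpa [Function.comp] using h2
  · intro h; funext x
    rw [h]; simp

lemma sum_mul_symDelta (i₀ : α → β) (W : (α → β) → ℝ) :
    ∑ i : α → β, W i * symDelta i₀ i = ∑ σ : Equiv.Perm α, W (i₀ ∘ ⇑σ⁻¹) := by
  unfold symDelta
  have hcard : ∀ i : α → β, ((Finset.univ.filter (fun σ : Equiv.Perm α => i ∘ σ = i₀)).card : ℝ)
      = ∑ σ : Equiv.Perm α, if i ∘ ⇑σ = i₀ then (1:ℝ) else 0 := by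
    intro i
    rw [Finset.card_filter]
    push_cast
    rfl
  simp_rw [hcard, Finset.mul_sum]
  rw [Finset.sum_comm]
  apply Finset.sum_congr rfl
  intro σ _
  have : ∀ i : α → β, (W i * if i ∘ ⇑σ = i₀ then (1:ℝ) else 0)
      = if i = i₀ ∘ ⇑σ⁻¹ then W i else 0 := by
    intro i
    by_cases h : i ∘ ⇑σ = i₀
    · rw [if_pos h, if_pos ((comp_perm_eq_iff i i₀ σ).1 h), mul_one]
    · rw [if_neg h, if_neg (fun hh => h ((comp_perm_eq_iff i i₀ σ).2 hh)), mul_zero]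
  simp_rw [this]
  rw [Finset.sum_ite_eq' Finset.univ (i₀ ∘ ⇑σ⁻¹) W]
  simp

lemma count_comp_perm (i : α → β) (σ : Equiv.Perm α) (j : β) :
    (Finset.univ.filter (fun t => (i ∘ ⇑σ) t = j)).card
      = (Finset.univ.filter (fun t => i t = j)).card := by
  apply Finset.card_bij' (fun t _ => σ t) (fun t _ => σ⁻¹ t)
  · intro t ht; simpa using ht
  · intro t ht; simp only [Finset.mem_filter, Finset.mem_univ, true_and, Function.comp] at ht ⊢
    simpa using ht
  · intro t _; simp
  · intro t _; simp

lemma symDelta_eq_zero (i₀ i₁ : α → β) (j : β)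
    (h : (Finset.univ.filter (fun t => i₀ t = j)).card
        ≠ (Finset.univ.filter (fun t => i₁ t = j)).card) :
    symDelta i₀ i₁ = 0 := by
  unfold symDelta
  rw [Finset.filter_eq_empty_iff.2, Finset.card_empty, Nat.cast_zero]
  intro σ _
  intro hσ
  apply h
  rw [← hσ]
  exact count_comp_perm i₁ σ j

end SymDelta

/-- KKT characterization of the projection of a 2d-th order tensor `Z` onto the affine slice
of super-symmetric tensors with `∑_{k∈K(n,d)} (d!/∏ k_j!) X_{1^{2k_1}⋯n^{2k_n}} = 1`:
off the all-even-multiplicity indices the projection agrees with the symmetrization `Ẑ`,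
and on them it is shifted by `(λ/2)·α(k,d)` with the explicit multiplier `λ`. -/
theorem stmt17 {n d : ℕ} [NeZero n]
    (Z Zhat : (Fin (d + d) → Fin n) → ℝ)
    (hZhat : Zhat = fun i =>
        (∑ σ : Equiv.Perm (Fin (d + d)), Z (i ∘ σ)) / (Nat.factorial (d + d) : ℝ))
    (alpha : (Fin n → ℕ) → ℝ)
    (halpha : alpha = fun k => (Nat.multinomial Finset.univ k : ℝ) /
        (Nat.multinomial Finset.univ (fun j => 2 * k j) : ℝ))
    (K : Finset (Fin n → Fin (d + 1)))
    (hK : K = Finset.univ.filter (fun k => ∑ j, (k j : ℕ) = d))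
    (lam : ℝ)
    (hlam : lam = 2 * (1 - ∑ k ∈ K, (Nat.multinomial Finset.univ (fun j => (k j : ℕ)) : ℝ)
          * Zhat (repIdx n d fun j => (k j : ℕ)))
        / ∑ k ∈ K, (Nat.multinomial Finset.univ (fun j => (k j : ℕ)) : ℝ)
          * alpha (fun j => (k j : ℕ)))
    (Xstar : (Fin (d + d) → Fin n) → ℝ)
    (hXfeas : SuperSym Xstar ∧
        ∑ k ∈ K, (Nat.multinomial Finset.univ (fun j => (k j : ℕ)) : ℝ)
          * Xstar (repIdx n d fun j => (k j : ℕ)) = 1)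
    (hXopt : ∀ X : (Fin (d + d) → Fin n) → ℝ, SuperSym X →
        ∑ k ∈ K, (Nat.multinomial Finset.univ (fun j => (k j : ℕ)) : ℝ)
          * X (repIdx n d fun j => (k j : ℕ)) = 1 →
        ∑ i : Fin (d + d) → Fin n, (Xstar i - Z i) ^ 2 ≤ ∑ i, (X i - Z i) ^ 2) :
    (∀ i : Fin (d + d) → Fin n,
        ¬ (∀ j : Fin n, Even (Finset.univ.filter (fun t => i t = j)).card) →
        Xstar i = Zhat i)
    ∧ ∀ k ∈ K, Xstar (repIdx n d fun j => (k j : ℕ))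
        = lam / 2 * alpha (fun j => (k j : ℕ))
          + Zhat (repIdx n d fun j => (k j : ℕ)) := by
  obtain ⟨hXsym, hXcon⟩ := hXfeas
  have hfact : (0:ℝ) < ((d+d).factorial : ℝ) := by
    exact_mod_cast Nat.factorial_pos _
  have hKsum : ∀ k ∈ K, ∑ j, ((k j : ℕ)) = d := by
    intro k hk
    rw [hK] at hk
    exact (Finset.mem_filter.1 hk).2
  -- the variational lemma
  have hvar : ∀ D : (Fin (d + d) → Fin n) → ℝ, SuperSym D →
      (∑ k ∈ K, (Nat.multinomial Finset.univ (fun j => (k j : ℕ)) : ℝ)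
        * D (repIdx n d fun j => (k j : ℕ))) = 0 →
      ∑ i : Fin (d + d) → Fin n, (Xstar i - Z i) * D i = 0 := by
    intro D hD hDcon
    set a := ∑ i : Fin (d + d) → Fin n, (Xstar i - Z i) * D i with ha
    set b := ∑ i : Fin (d + d) → Fin n, D i ^ 2 with hb
    have hbnn : 0 ≤ b := Finset.sum_nonneg fun i _ => sq_nonneg _
    have key : ∀ t : ℝ, 0 ≤ 2 * t * a + t ^ 2 * b := by
      intro t
      have hsym : SuperSym (fun i => Xstar i + t * D i) := by
        intro σ i
        simp only []
        rw [hXsym σ i, hD σ i]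
      have hcon : ∑ k ∈ K, (Nat.multinomial Finset.univ (fun j => (k j : ℕ)) : ℝ)
          * ((fun i => Xstar i + t * D i) (repIdx n d fun j => (k j : ℕ))) = 1 := by
        simp only []
        simp_rw [mul_add]
        rw [Finset.sum_add_distrib, hXcon]
        have : ∑ k ∈ K, (Nat.multinomial Finset.univ (fun j => (k j : ℕ)) : ℝ)
            * (t * D (repIdx n d fun j => (k j : ℕ)))
            = t * ∑ k ∈ K, (Nat.multinomial Finset.univ (fun j => (k j : ℕ)) : ℝ)
            * D (repIdx n d fun j => (k j : ℕ)) := by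
          rw [Finset.mul_sum]
          apply Finset.sum_congr rfl
          intro k _; ring
        rw [this, hDcon, mul_zero, add_zero]
      have h := hXopt _ hsym hcon
      have expand : ∑ i : Fin (d + d) → Fin n, ((Xstar i + t * D i) - Z i) ^ 2
          = (∑ i : Fin (d + d) → Fin n, (Xstar i - Z i) ^ 2) + (2 * t * a + t ^ 2 * b) := by
        rw [ha, hb, Finset.mul_sum, Finset.mul_sum, ← Finset.sum_add_distrib,
          ← Finset.sum_add_distrib]
        apply Finset.sum_congr rfl
        intro i _; ring
      rw [expand] at h
      linarith
    have h1 := key (-(a / (b + 1)))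
    have hc : (0:ℝ) < b + 1 := by linarith
    have h2 : 0 ≤ (2 * (-(a / (b + 1))) * a + (-(a / (b + 1))) ^ 2 * b) * ((b+1)*(b+1)) :=
      mul_nonneg h1 (by positivity)
    have h3 : (2 * (-(a / (b + 1))) * a + (-(a / (b + 1))) ^ 2 * b) * ((b+1)*(b+1))
        = -2 * a ^ 2 * (b + 1) + a ^ 2 * b := by
      field_simp
    have h4 : a ^ 2 ≤ 0 := by nlinarith [h2, h3, hc]
    have h5 : a ^ 2 = 0 := le_antisymm h4 (sq_nonneg a)
    exact (pow_eq_zero_iff two_ne_zero).1 h5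
  -- inner products with symDelta
  have hinner : ∀ i₀ : Fin (d + d) → Fin n,
      ∑ i : Fin (d + d) → Fin n, (Xstar i - Z i) * symDelta i₀ i
        = ((d+d).factorial : ℝ) * (Xstar i₀ - Zhat i₀) := by
    intro i₀
    rw [sum_mul_symDelta]
    have h1 : ∀ σ : Equiv.Perm (Fin (d + d)), Xstar (i₀ ∘ ⇑σ⁻¹) = Xstar i₀ := fun σ =>
      hXsym σ⁻¹ i₀
    have h2 : (∑ σ : Equiv.Perm (Fin (d + d)), Z (i₀ ∘ ⇑σ⁻¹))
        = ∑ σ : Equiv.Perm (Fin (d + d)), Z (i₀ ∘ ⇑σ) := by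
      apply Finset.sum_bijective (fun σ => σ⁻¹) (Equiv.bijective (Equiv.inv _))
      · intro σ; simp
      · intro σ _; rfl
    have hcardp : (Fintype.card (Equiv.Perm (Fin (d + d))) : ℝ) = ((d+d).factorial : ℝ) := by
      rw [Fintype.card_perm, Fintype.card_fin]
    calc ∑ σ : Equiv.Perm (Fin (d + d)), (Xstar (i₀ ∘ ⇑σ⁻¹) - Z (i₀ ∘ ⇑σ⁻¹))
        = ∑ σ : Equiv.Perm (Fin (d + d)), Xstar (i₀ ∘ ⇑σ⁻¹)
          - ∑ σ : Equiv.Perm (Fin (d + d)), Z (i₀ ∘ ⇑σ⁻¹) := Finset.sum_sub_distrib _ _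
      _ = ((d+d).factorial : ℝ) * Xstar i₀ - ((d+d).factorial : ℝ) * Zhat i₀ := by
          rw [h2]
          congr 1
          · simp_rw [h1]
            rw [Finset.sum_const, nsmul_eq_mul, Finset.card_univ, hcardp]
          · rw [hZhat]
            simp only []
            field_simp
      _ = ((d+d).factorial : ℝ) * (Xstar i₀ - Zhat i₀) := by ring
  refine ⟨?_, ?_⟩
  · -- part 1
    intro i₀ hne
    have hvan : ∀ k ∈ K, symDelta i₀ (repIdx n d fun j => (k j : ℕ)) = 0 := by
      intro k hk
      push_neg at hne
      obtain ⟨j, hj⟩ := hne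
      apply symDelta_eq_zero _ _ j
      rw [repCount n d _ (hKsum k hk) j]
      intro hc
      exact hj (hc ▸ (even_two_mul _))
    have hcon0 : (∑ k ∈ K, (Nat.multinomial Finset.univ (fun j => (k j : ℕ)) : ℝ)
        * symDelta i₀ (repIdx n d fun j => (k j : ℕ))) = 0 := by
      apply Finset.sum_eq_zero
      intro k hk
      rw [hvan k hk, mul_zero]
    have h := hvar (symDelta i₀) (superSym_symDelta i₀) hcon0
    rw [hinner i₀] at h
    have := mul_eq_zero.1 h
    rcases this with h' | h'
    · exact absurd h' (ne_of_gt hfact)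
    · linarith
  · -- part 2
    intro k₀ hk₀
    -- diagonal values of symDelta
    have hdiag : ∀ k ∈ K, ∀ k' ∈ K,
        symDelta (repIdx n d fun j => (k j : ℕ)) (repIdx n d fun j => ((k' : Fin n → Fin (d+1)) j : ℕ))
          = if k' = k then ((∏ j : Fin n, (2 * (k j : ℕ)).factorial : ℕ) : ℝ) else 0 := by
      intro k hk k' hk'
      by_cases hkk : k' = k
      · subst hkk
        rw [if_pos rfl]
        unfold symDelta
        rw [show (Finset.univ.filter (fun σ : Equiv.Perm (Fin (d+d)) =>
            (repIdx n d fun j => ((k' j : ℕ))) ∘ σ = (repIdx n d fun j => ((k' j : ℕ))))).card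
            = ∏ j : Fin n, ((Finset.univ.filter
              (fun t => (repIdx n d fun j => ((k' j : ℕ))) t = j)).card).factorial
          from stabCard _]
        push_cast
        apply Finset.prod_congr rfl
        intro j _
        rw [repCount n d _ (hKsum k' hk') j]
      · rw [if_neg hkk]
        have : ∃ j, (k j : ℕ) ≠ (k' j : ℕ) := by
          by_contra hcon
          push_neg at hcon
          exact hkk (funext fun j => by
            have := hcon j
            exact (Fin.ext (by omega)).symm)
        obtain ⟨j, hj⟩ := this
        apply symDelta_eq_zero _ _ j
        rw [repCount n d _ (hKsum k hk) j, repCount n d _ (hKsum k' hk') j]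
        omega
    -- abbreviations (as plain functions)
    have hsum2 : ∀ k ∈ K, ∑ j : Fin n, 2 * ((k : Fin n → Fin (d+1)) j : ℕ) = d + d := by
      intro k hk
      rw [← Finset.mul_sum, hKsum k hk]
      omega
    -- alpha in terms of A
    have halphaA : ∀ k ∈ K, alpha (fun j => ((k : Fin n → Fin (d+1)) j : ℕ)) * ((d+d).factorial : ℝ)
        = (Nat.multinomial Finset.univ (fun j => (k j : ℕ)) : ℝ)
          * ((∏ j : Fin n, (2 * (k j : ℕ)).factorial : ℕ) : ℝ) := by
      intro k hk
      have hspec := Nat.multinomial_spec (Finset.univ : Finset (Fin n))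
        (fun j => 2 * ((k j : ℕ)))
      rw [hsum2 k hk] at hspec
      have hcast : ((∏ j : Fin n, (2 * (k j : ℕ)).factorial : ℕ) : ℝ)
          * ((Nat.multinomial Finset.univ (fun j => 2 * (k j : ℕ)) : ℕ) : ℝ)
          = ((d+d).factorial : ℝ) := by
        exact_mod_cast congrArg (fun x : ℕ => (x : ℝ)) hspec
      have hm2 : ((Nat.multinomial Finset.univ (fun j => 2 * (k j : ℕ)) : ℕ) : ℝ) ≠ 0 := by
        exact_mod_cast (Nat.multinomial_pos _ _).ne'
      rw [halpha]
      simp only []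
      rw [← hcast]
      field_simp
    -- pairwise proportionality
    have hAD : ∀ k ∈ K, ∀ k' ∈ K,
        ((Nat.multinomial Finset.univ (fun j => ((k' : Fin n → Fin (d+1)) j : ℕ)) : ℝ)
            * ((∏ j : Fin n, (2 * (k' j : ℕ)).factorial : ℕ) : ℝ))
          * (Xstar (repIdx n d fun j => ((k : Fin n → Fin (d+1)) j : ℕ))
              - Zhat (repIdx n d fun j => (k j : ℕ)))
        = ((Nat.multinomial Finset.univ (fun j => (k j : ℕ)) : ℝ)
            * ((∏ j : Fin n, (2 * (k j : ℕ)).factorial : ℕ) : ℝ))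
          * (Xstar (repIdx n d fun j => (k' j : ℕ))
              - Zhat (repIdx n d fun j => (k' j : ℕ))) := by
      intro k hk k' hk'
      set c1 : ℝ := (Nat.multinomial Finset.univ (fun j => (k' j : ℕ)) : ℝ)
        * ((∏ j : Fin n, (2 * (k' j : ℕ)).factorial : ℕ) : ℝ) with hc1
      set c2 : ℝ := (Nat.multinomial Finset.univ (fun j => (k j : ℕ)) : ℝ)
        * ((∏ j : Fin n, (2 * (k j : ℕ)).factorial : ℕ) : ℝ) with hc2
      set D : (Fin (d + d) → Fin n) → ℝ := fun i =>
        c1 * symDelta (repIdx n d fun j => (k j : ℕ)) i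
          - c2 * symDelta (repIdx n d fun j => (k' j : ℕ)) i with hD
      have hDsym : SuperSym D := by
        intro σ i
        rw [hD]
        simp only []
        rw [superSym_symDelta _ σ i, superSym_symDelta _ σ i]
      have hDcon : (∑ k'' ∈ K, (Nat.multinomial Finset.univ (fun j => (k'' j : ℕ)) : ℝ)
          * D (repIdx n d fun j => (k'' j : ℕ))) = 0 := by
        have hterm : ∀ k'' ∈ K, (Nat.multinomial Finset.univ (fun j => (k'' j : ℕ)) : ℝ)
            * D (repIdx n d fun j => (k'' j : ℕ))
            = (if k'' = k then (Nat.multinomial Finset.univ (fun j => (k'' j : ℕ)) : ℝ)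
                * c1 * ((∏ j : Fin n, (2 * (k j : ℕ)).factorial : ℕ) : ℝ) else 0)
              - (if k'' = k' then (Nat.multinomial Finset.univ (fun j => (k'' j : ℕ)) : ℝ)
                * c2 * ((∏ j : Fin n, (2 * (k' j : ℕ)).factorial : ℕ) : ℝ) else 0) := by
          intro k'' hk''
          rw [hD]
          simp only []
          rw [hdiag k hk k'' hk'', hdiag k' hk' k'' hk'']
          split_ifs <;> ring
        rw [Finset.sum_congr rfl hterm, Finset.sum_sub_distrib,
          Finset.sum_ite_eq' K k _, Finset.sum_ite_eq' K k' _, if_pos hk, if_pos hk']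
        rw [hc1, hc2]
        ring
      have h := hvar D hDsym hDcon
      have hsplit : ∑ i : Fin (d + d) → Fin n, (Xstar i - Z i) * D i
          = c1 * (((d+d).factorial : ℝ)
              * (Xstar (repIdx n d fun j => (k j : ℕ)) - Zhat (repIdx n d fun j => (k j : ℕ))))
            - c2 * (((d+d).factorial : ℝ)
              * (Xstar (repIdx n d fun j => (k' j : ℕ)) - Zhat (repIdx n d fun j => (k' j : ℕ)))) := by
        rw [← hinner, ← hinner, Finset.mul_sum, Finset.mul_sum, ← Finset.sum_sub_distrib]
        apply Finset.sum_congr rfl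
        intro i _
        rw [hD]
        ring
      rw [hsplit] at h
      have := sub_eq_zero.1 h
      have h2 : ((d+d).factorial : ℝ)
          * (c1 * (Xstar (repIdx n d fun j => (k j : ℕ)) - Zhat (repIdx n d fun j => (k j : ℕ))))
          = ((d+d).factorial : ℝ)
          * (c2 * (Xstar (repIdx n d fun j => (k' j : ℕ)) - Zhat (repIdx n d fun j => (k' j : ℕ)))) := by
        rw [show ((d+d).factorial : ℝ)
            * (c1 * (Xstar (repIdx n d fun j => (k j : ℕ)) - Zhat (repIdx n d fun j => (k j : ℕ))))
          = c1 * (((d+d).factorial : ℝ)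
            * (Xstar (repIdx n d fun j => (k j : ℕ)) - Zhat (repIdx n d fun j => (k j : ℕ)))) from by ring,
          this]
        ring
      exact mul_left_cancel₀ (ne_of_gt hfact) h2
    -- proportionality with alpha
    have halD : ∀ k ∈ K, ∀ k' ∈ K,
        alpha (fun j => ((k' : Fin n → Fin (d+1)) j : ℕ))
          * (Xstar (repIdx n d fun j => ((k : Fin n → Fin (d+1)) j : ℕ))
              - Zhat (repIdx n d fun j => (k j : ℕ)))
        = alpha (fun j => (k j : ℕ))
          * (Xstar (repIdx n d fun j => (k' j : ℕ))
              - Zhat (repIdx n d fun j => (k' j : ℕ))) := by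
      intro k hk k' hk'
      have h := hAD k hk k' hk'
      rw [← halphaA k hk, ← halphaA k' hk'] at h
      apply mul_left_cancel₀ (ne_of_gt hfact)
      rw [show ((d+d).factorial : ℝ) * (alpha (fun j => ((k' : Fin n → Fin (d+1)) j : ℕ))
          * (Xstar (repIdx n d fun j => (k j : ℕ)) - Zhat (repIdx n d fun j => (k j : ℕ))))
        = (alpha (fun j => (k' j : ℕ)) * ((d+d).factorial : ℝ))
          * (Xstar (repIdx n d fun j => (k j : ℕ)) - Zhat (repIdx n d fun j => (k j : ℕ))) from by ring,
        h]
      ring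
    -- positivity of the denominator
    have halpos : ∀ k ∈ K, 0 < alpha (fun j => ((k : Fin n → Fin (d+1)) j : ℕ)) := by
      intro k _
      rw [halpha]
      apply div_pos
      · exact_mod_cast Nat.multinomial_pos _ _
      · exact_mod_cast Nat.multinomial_pos _ _
    have hSden : 0 < ∑ k ∈ K, (Nat.multinomial Finset.univ (fun j => (k j : ℕ)) : ℝ)
        * alpha (fun j => (k j : ℕ)) := by
      apply Finset.sum_pos'
      · intro k hk
        exact le_of_lt (mul_pos (by exact_mod_cast Nat.multinomial_pos _ _) (halpos k hk))
      · exact ⟨k₀, hk₀, mul_pos (by exact_mod_cast Nat.multinomial_pos _ _) (halpos k₀ hk₀)⟩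
    -- numerator identity
    have hnum : 1 - ∑ k ∈ K, (Nat.multinomial Finset.univ (fun j => (k j : ℕ)) : ℝ)
          * Zhat (repIdx n d fun j => (k j : ℕ))
        = ∑ k ∈ K, (Nat.multinomial Finset.univ (fun j => (k j : ℕ)) : ℝ)
          * (Xstar (repIdx n d fun j => (k j : ℕ)) - Zhat (repIdx n d fun j => (k j : ℕ))) := by
      rw [← hXcon, ← Finset.sum_sub_distrib]
      apply Finset.sum_congr rfl
      intro k _
      ring
    -- the key identity
    have hkey : (Xstar (repIdx n d fun j => (k₀ j : ℕ)) - Zhat (repIdx n d fun j => (k₀ j : ℕ)))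
        * (∑ k ∈ K, (Nat.multinomial Finset.univ (fun j => (k j : ℕ)) : ℝ)
            * alpha (fun j => (k j : ℕ)))
        = alpha (fun j => (k₀ j : ℕ))
        * (∑ k ∈ K, (Nat.multinomial Finset.univ (fun j => (k j : ℕ)) : ℝ)
            * (Xstar (repIdx n d fun j => (k j : ℕ)) - Zhat (repIdx n d fun j => (k j : ℕ)))) := by
      rw [Finset.mul_sum, Finset.mul_sum]
      apply Finset.sum_congr rfl
      intro k hk
      have h := halD k₀ hk₀ k hk
      calc (Xstar (repIdx n d fun j => (k₀ j : ℕ)) - Zhat (repIdx n d fun j => (k₀ j : ℕ)))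
          * ((Nat.multinomial Finset.univ (fun j => (k j : ℕ)) : ℝ) * alpha (fun j => (k j : ℕ)))
          = (Nat.multinomial Finset.univ (fun j => (k j : ℕ)) : ℝ)
            * (alpha (fun j => (k j : ℕ))
              * (Xstar (repIdx n d fun j => (k₀ j : ℕ))
                - Zhat (repIdx n d fun j => (k₀ j : ℕ)))) := by ring
        _ = (Nat.multinomial Finset.univ (fun j => (k j : ℕ)) : ℝ)
            * (alpha (fun j => (k₀ j : ℕ))
              * (Xstar (repIdx n d fun j => (k j : ℕ))
                - Zhat (repIdx n d fun j => (k j : ℕ)))) := by rw [h]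
        _ = alpha (fun j => (k₀ j : ℕ))
            * ((Nat.multinomial Finset.univ (fun j => (k j : ℕ)) : ℝ)
              * (Xstar (repIdx n d fun j => (k j : ℕ))
                - Zhat (repIdx n d fun j => (k j : ℕ)))) := by ring
    -- conclude
    have hfin : lam / 2 * alpha (fun j => (k₀ j : ℕ))
        = Xstar (repIdx n d fun j => (k₀ j : ℕ)) - Zhat (repIdx n d fun j => (k₀ j : ℕ)) := by
      rw [hlam, hnum]
      rw [show 2 * (∑ k ∈ K, (Nat.multinomial Finset.univ (fun j => (k j : ℕ)) : ℝ)
            * (Xstar (repIdx n d fun j => (k j : ℕ)) - Zhat (repIdx n d fun j => (k j : ℕ))))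
          / (∑ k ∈ K, (Nat.multinomial Finset.univ (fun j => (k j : ℕ)) : ℝ)
            * alpha (fun j => (k j : ℕ))) / 2 * alpha (fun j => (k₀ j : ℕ))
          = (alpha (fun j => (k₀ j : ℕ))
              * ∑ k ∈ K, (Nat.multinomial Finset.univ (fun j => (k j : ℕ)) : ℝ)
                * (Xstar (repIdx n d fun j => (k j : ℕ)) - Zhat (repIdx n d fun j => (k j : ℕ))))
            / (∑ k ∈ K, (Nat.multinomial Finset.univ (fun j => (k j : ℕ)) : ℝ)
              * alpha (fun j => (k j : ℕ))) from by ring]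
      rw [← hkey, mul_div_assoc, div_self (ne_of_gt hSden), mul_one]
    linarith [hfin]
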